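/- arXiv:0906.5436 — 2 statements merged into one kernel-verified Lean document; each statement's English description precedes it below -/
import Mathlib

section
/- For every r ∈ [1,∞) and every integer n ≥ 2, the probability distribution of the arc count A_n := Σ_{i≠j} 1{X_j ∈ N_{T'}^r(X_i)}, where X_1,…,X_n are independent uniform random points in a nondegenerate closed triangle T' ⊂ ℝ², is the same for every choice of nondegenerate triangle T'; in particular it equals the distribution of the corresponding arc count for independent uniform points in the standard equilateral triangle T with vertices (0,0), (1,0), (1/2,√3/2). (Geometry invariance of the relative arc density of the r-factor proximity catch digraph.) -/
open MeasureTheory Real Set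

noncomputable section

/-- The z-component of the cross product of two planar vectors. -/
def cross (u v : ℝ × ℝ) : ℝ := u.1 * v.2 - u.2 * v.1

/-- Barycentric coordinates of `x` with respect to the triangle with
vertices `a`, `b`, `c`. -/
def bary (a b c x : ℝ × ℝ) : Fin 3 → ℝ := fun i =>
  if i = 1 then cross (x - a) (c - a) / cross (b - a) (c - a)
  else if i = 2 then cross (b - a) (x - a) / cross (b - a) (c - a)
  else 1 - cross (x - a) (c - a) / cross (b - a) (c - a)
    - cross (b - a) (x - a) / cross (b - a) (c - a)

/-- The closed triangle with vertices `a`, `b`, `c` (the set of points with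
nonnegative barycentric coordinates). -/
def tri (a b c : ℝ × ℝ) : Set (ℝ × ℝ) := {x | ∀ i : Fin 3, 0 ≤ bary a b c x i}

/-- The least index maximizing the barycentric coordinates of `x`. -/
def jmax (a b c x : ℝ × ℝ) : Fin 3 :=
  if bary a b c x 1 ≤ bary a b c x 0 ∧ bary a b c x 2 ≤ bary a b c x 0 then 0
  else if bary a b c x 2 ≤ bary a b c x 1 then 1 else 2

/-- The `r`-factor proximity region of `x` in the triangle with vertices `a`, `b`, `c`:
`N^r(x) = {z ∈ T : 1 − β_{j(x)}(z) ≤ r (1 − β_{j(x)}(x))}`. -/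
def prox (a b c : ℝ × ℝ) (r : ℝ) (x : ℝ × ℝ) : Set (ℝ × ℝ) :=
  {z | z ∈ tri a b c ∧
    1 - bary a b c z (jmax a b c x) ≤ r * (1 - bary a b c x (jmax a b c x))}

/-- The uniform probability measure on `s ⊆ ℝ²` (normalized Lebesgue measure). -/
def unif (s : Set (ℝ × ℝ)) : Measure (ℝ × ℝ) := (volume s)⁻¹ • volume.restrict s

def y1 : ℝ × ℝ := (0, 0)
def y2 : ℝ × ℝ := (1, 0)
def y3 : ℝ × ℝ := (1 / 2, Real.sqrt 3 / 2)

/-- The standard equilateral triangle. -/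
def T : Set (ℝ × ℝ) := tri y1 y2 y3

/-- The `r`-factor proximity region in the standard triangle. -/
def N (r : ℝ) (x : ℝ × ℝ) : Set (ℝ × ℝ) := prox y1 y2 y3 r x

/-- The null arc probability `μ(r) = P(X₂ ∈ N^r(X₁))` for independent uniform
points in the standard triangle. -/
def mu (r : ℝ) : ℝ := (((unif T).prod (unif T)) {p | p.2 ∈ N r p.1}).toReal

open Classical in
/-- The number of arcs of the data-random proximity catch digraph on the
points `x 0, …, x (n-1)` in the triangle with vertices `a`, `b`, `c`. -/
def arcCount (a b c : ℝ × ℝ) (r : ℝ) {n : ℕ} (x : Fin n → ℝ × ℝ) : ℕ :=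
  ∑ i : Fin n, ∑ j : Fin n, if i ≠ j ∧ x j ∈ prox a b c r (x i) then 1 else 0

/-! ### Auxiliary material for the proof -/

namespace GeomInvAux

lemma s3_pos : (0:ℝ) < Real.sqrt 3 := Real.sqrt_pos.mpr (by norm_num)
lemma s3_ne : Real.sqrt 3 ≠ 0 := ne_of_gt s3_pos

/-- The linear part of the affine map sending the standard triangle to `a b c`. -/
def Llin (a b c : ℝ × ℝ) : (ℝ × ℝ) →ₗ[ℝ] (ℝ × ℝ) :=
  Matrix.toLin (Module.Basis.finTwoProd ℝ) (Module.Basis.finTwoProd ℝ)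
    !![b.1 - a.1, (2*(c.1-a.1) - (b.1-a.1))/Real.sqrt 3;
       b.2 - a.2, (2*(c.2-a.2) - (b.2-a.2))/Real.sqrt 3]

lemma Llin_apply (a b c : ℝ × ℝ) (x : ℝ × ℝ) :
    Llin a b c x = ((b.1-a.1)*x.1 + ((2*(c.1-a.1) - (b.1-a.1))/Real.sqrt 3)*x.2,
                    (b.2-a.2)*x.1 + ((2*(c.2-a.2) - (b.2-a.2))/Real.sqrt 3)*x.2) := by
  simp [Llin, Matrix.toLin_finTwoProd_apply]

/-- The affine map sending the standard triangle to the triangle `a b c`. -/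
def L (a b c : ℝ × ℝ) (x : ℝ × ℝ) : ℝ × ℝ := a + Llin a b c x

lemma det_Llin (a b c : ℝ × ℝ) :
    LinearMap.det (Llin a b c) = 2 * cross (b-a) (c-a) / Real.sqrt 3 := by
  rw [Llin, LinearMap.det_toLin, Matrix.det_fin_two_of]
  simp only [cross, Prod.fst_sub, Prod.snd_sub]
  field_simp
  ring

variable {a b c : ℝ × ℝ}

lemma bary_L (hnd : cross (b - a) (c - a) ≠ 0) (x : ℝ × ℝ) (i : Fin 3) :
    bary a b c (L a b c x) i = bary y1 y2 y3 x i := by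
  have hD : (b.1-a.1)*(c.2-a.2) - (b.2-a.2)*(c.1-a.1) ≠ 0 := by
    simpa [cross] using hnd
  have h1 : cross (L a b c x - a) (c - a) / cross (b - a) (c - a)
      = cross (x - y1) (y3 - y1) / cross (y2 - y1) (y3 - y1) := by
    simp only [L, Llin_apply, cross, y1, y2, y3, Prod.fst_sub, Prod.snd_sub, Prod.fst_add,
      Prod.snd_add, add_sub_cancel_left]
    rw [div_eq_iff hD]
    field_simp
    ring
  have h2 : cross (b - a) (L a b c x - a) / cross (b - a) (c - a)
      = cross (y2 - y1) (x - y1) / cross (y2 - y1) (y3 - y1) := by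
    simp only [L, Llin_apply, cross, y1, y2, y3, Prod.fst_sub, Prod.snd_sub, Prod.fst_add,
      Prod.snd_add, add_sub_cancel_left]
    rw [div_eq_iff hD]
    field_simp
    ring
  fin_cases i <;> simp [bary, h1, h2]

lemma jmax_L (hnd : cross (b - a) (c - a) ≠ 0) (x : ℝ × ℝ) :
    jmax a b c (L a b c x) = jmax y1 y2 y3 x := by
  simp [jmax, bary_L hnd]

lemma mem_tri_L (hnd : cross (b - a) (c - a) ≠ 0) (x : ℝ × ℝ) :
    L a b c x ∈ tri a b c ↔ x ∈ T := by
  simp [tri, T, bary_L hnd]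

lemma mem_prox_L (hnd : cross (b - a) (c - a) ≠ 0) (r : ℝ) (x z : ℝ × ℝ) :
    L a b c z ∈ prox a b c r (L a b c x) ↔ z ∈ prox y1 y2 y3 r x := by
  simp only [prox, Set.mem_setOf_eq, mem_tri_L hnd, jmax_L hnd, bary_L hnd, T]

lemma continuous_bary (a b c : ℝ × ℝ) (i : Fin 3) :
    Continuous fun x => bary a b c x i := by
  have h1 : Continuous fun x : ℝ × ℝ => cross (x - a) (c - a) / cross (b - a) (c - a) := by
    simp only [cross, Prod.fst_sub, Prod.snd_sub]
    fun_prop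
  have h2 : Continuous fun x : ℝ × ℝ => cross (b - a) (x - a) / cross (b - a) (c - a) := by
    simp only [cross, Prod.fst_sub, Prod.snd_sub]
    fun_prop
  fin_cases i
  · exact (((continuous_const : Continuous fun _ : ℝ × ℝ => (1:ℝ)).sub h1).sub h2).congr fun x => by simp [bary]
  · simpa [bary] using h1
  · simpa [bary] using h2

lemma isClosed_tri (a b c : ℝ × ℝ) : IsClosed (tri a b c) := by
  have : tri a b c = ⋂ i : Fin 3, {x | 0 ≤ bary a b c x i} := by
    ext x; simp [tri]
  rw [this]
  exact isClosed_iInter fun i => isClosed_le continuous_const (continuous_bary a b c i)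

lemma measurable_jmax (a b c : ℝ × ℝ) : Measurable (jmax a b c) := by
  have m0 : ∀ i j : Fin 3, MeasurableSet {x : ℝ × ℝ | bary a b c x i ≤ bary a b c x j} :=
    fun i j => measurableSet_le (continuous_bary a b c i).measurable
      (continuous_bary a b c j).measurable
  unfold jmax
  exact Measurable.ite ((m0 1 0).inter (m0 2 0)) measurable_const
    (Measurable.ite (m0 2 1) measurable_const measurable_const)

lemma measurableSet_proxPair (a b c : ℝ × ℝ) (r : ℝ) :
    MeasurableSet {p : (ℝ × ℝ) × (ℝ × ℝ) | p.2 ∈ prox a b c r p.1} := by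
  have : {p : (ℝ × ℝ) × (ℝ × ℝ) | p.2 ∈ prox a b c r p.1}
      = (Prod.snd ⁻¹' tri a b c) ∩
        ⋃ j : Fin 3, ((fun p : (ℝ × ℝ) × (ℝ × ℝ) => jmax a b c p.1) ⁻¹' {j} ∩
          {p : (ℝ × ℝ) × (ℝ × ℝ) |
              1 - bary a b c p.2 j ≤ r * (1 - bary a b c p.1 j)}) := by
    ext ⟨x, z⟩
    simp only [prox, Set.mem_setOf_eq, Set.mem_inter_iff, Set.mem_preimage, Set.mem_iUnion,
      Set.mem_singleton_iff]
    constructor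
    · rintro ⟨h1, h2⟩
      exact ⟨h1, jmax a b c x, rfl, h2⟩
    · rintro ⟨h1, j, hj, h2⟩
      exact ⟨h1, by rwa [hj]⟩
  rw [this]
  refine ((isClosed_tri a b c).measurableSet.preimage measurable_snd).inter
    (MeasurableSet.iUnion fun j => MeasurableSet.inter
      (((measurable_jmax a b c).comp measurable_fst) (measurableSet_singleton j)) ?_)
  exact measurableSet_le
    (continuous_const.sub ((continuous_bary a b c j).comp continuous_snd)).measurable
    (continuous_const.mul
      (continuous_const.sub ((continuous_bary a b c j).comp continuous_fst))).measurable

set_option maxHeartbeats 1000000 in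
lemma measurable_arcCount (a b c : ℝ × ℝ) (r : ℝ) (n : ℕ) :
    Measurable (arcCount a b c r (n := n)) := by
  classical
  unfold arcCount
  refine Finset.measurable_sum _ fun i _ => Finset.measurable_sum _ fun j _ => ?_
  by_cases hij : i = j
  · simp only [hij, ne_eq, not_true_eq_false, false_and, if_false]
    exact measurable_const
  · have hmeas : MeasurableSet {x : Fin n → ℝ × ℝ | x j ∈ prox a b c r (x i)} := by
      have heq : {x : Fin n → ℝ × ℝ | x j ∈ prox a b c r (x i)}
          = (fun x : Fin n → ℝ × ℝ => (x i, x j)) ⁻¹'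
            {p : (ℝ × ℝ) × (ℝ × ℝ) | p.2 ∈ prox a b c r p.1} := rfl
      rw [heq]
      exact (measurableSet_proxPair a b c r).preimage
        ((measurable_pi_apply i).prodMk (measurable_pi_apply j))
    have : (fun x : Fin n → ℝ × ℝ => if i ≠ j ∧ x j ∈ prox a b c r (x i) then (1:ℕ) else 0)
        = fun x => if x j ∈ prox a b c r (x i) then (1:ℕ) else 0 := by
      funext x
      simp [hij]
    rw [this]
    exact Measurable.ite hmeas measurable_const measurable_const

lemma continuous_L (a b c : ℝ × ℝ) : Continuous (L a b c) :=
  continuous_const.add (Llin a b c).continuous_of_finiteDimensional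

instance unif_finite (s : Set (ℝ × ℝ)) : IsFiniteMeasure (unif s) := by
  constructor
  rw [unif, Measure.smul_apply, Measure.restrict_apply_univ, smul_eq_mul]
  rcases eq_or_ne (volume s) 0 with h | h
  · simp [h]
  · rcases eq_or_ne (volume s) ⊤ with h' | h'
    · simp [h']
    · rw [ENNReal.inv_mul_cancel h h']
      exact ENNReal.one_lt_top

lemma measurePreserving_L (hnd : cross (b - a) (c - a) ≠ 0) :
    MeasurePreserving (L a b c) (unif T) (unif (tri a b c)) := by
  have hdet : LinearMap.det (Llin a b c) ≠ 0 := by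
    rw [det_Llin]
    exact div_ne_zero (mul_ne_zero two_ne_zero hnd) s3_ne
  have hmeasL : Measurable (L a b c) := (continuous_L a b c).measurable
  refine ⟨hmeasL, ?_⟩
  set k : ENNReal := ENNReal.ofReal |(LinearMap.det (Llin a b c))⁻¹| with hk
  have hk0 : k ≠ 0 := by
    rw [hk]
    simp only [ne_eq, ENNReal.ofReal_eq_zero, not_le]
    exact abs_pos.mpr (inv_ne_zero hdet)
  have hktop : k ≠ ⊤ := ENNReal.ofReal_ne_top
  have hmapvol : Measure.map (L a b c) volume = k • volume := by
    have h1 : Measure.map (Llin a b c) volume = k • volume :=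
      Measure.map_linearMap_addHaar_eq_smul_addHaar volume hdet
    have h2 : L a b c = (fun y => a + y) ∘ (Llin a b c) := rfl
    rw [h2, ← Measure.map_map (measurable_const_add a)
      (Llin a b c).continuous_of_finiteDimensional.measurable, h1, Measure.map_smul,
      map_add_left_eq_self]
  have htri : MeasurableSet (tri a b c) := (isClosed_tri a b c).measurableSet
  have hT : T = L a b c ⁻¹' (tri a b c) := by
    ext x
    exact (mem_tri_L hnd x).symm
  have hvolT : volume T = k * volume (tri a b c) := by
    rw [hT, ← Measure.map_apply hmeasL htri, hmapvol]
    rfl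
  rw [unif, unif, Measure.map_smul, hT, ← Measure.restrict_map hmeasL htri, hmapvol,
    Measure.restrict_smul, smul_smul, ← hT, hvolT]
  congr 1
  rw [ENNReal.mul_inv (Or.inl hk0) (Or.inl hktop), mul_comm, ← mul_assoc,
    ENNReal.mul_inv_cancel hk0 hktop, one_mul]

end GeomInvAux

open GeomInvAux in
/-- Geometry invariance: for `n ≥ 2` iid uniform points in any nondegenerate
triangle, the distribution of the arc count of the `r`-factor proximity catch
digraph does not depend on the triangle; it equals the one for the standard
equilateral triangle. -/
theorem geometry_invariance (r : ℝ) (hr : 1 ≤ r) (n : ℕ) (hn : 2 ≤ n)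
    (a b c : ℝ × ℝ) (hnd : cross (b - a) (c - a) ≠ 0) :
    Measure.map (arcCount a b c r) (Measure.pi fun _ : Fin n => unif (tri a b c)) =
      Measure.map (arcCount y1 y2 y3 r) (Measure.pi fun _ : Fin n => unif T) := by
  classical
  have mp : MeasurePreserving (fun (x : Fin n → ℝ × ℝ) (i : Fin n) => L a b c (x i))
      (Measure.pi fun _ : Fin n => unif T) (Measure.pi fun _ : Fin n => unif (tri a b c)) :=
    measurePreserving_pi _ _ fun _ => measurePreserving_L hnd
  rw [← mp.map_eq, Measure.map_map (measurable_arcCount a b c r n) mp.measurable]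
  congr 1
  funext x
  show arcCount a b c r (fun i => L a b c (x i)) = arcCount y1 y2 y3 r x
  unfold arcCount
  refine Finset.sum_congr rfl fun i _ => Finset.sum_congr rfl fun j _ => ?_
  exact if_congr (and_congr_right fun _ => mem_prox_L hnd r (x i) (x j)) rfl rfl
end
end

section
/- Let X₁, X₂ be independent with law U_T. Then the arc probability μ(r) := P(X₂ ∈ N^r(X₁)) satisfies: μ(r) = (37/216)·r² for r ∈ [1, 3/2); μ(r) = −r²/8 + 4 − 8·r⁻¹ + (9/2)·r⁻² for r ∈ [3/2, 2); and μ(r) = 1 − (3/2)·r⁻² for r ∈ [2, ∞). -/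
open MeasureTheory Real Set

noncomputable section

/-- coordinates -/
def B1 (p : ℝ × ℝ) : ℝ := p.1 - p.2 / Real.sqrt 3
def B2 (p : ℝ × ℝ) : ℝ := 2 * p.2 / Real.sqrt 3
def B0 (p : ℝ × ℝ) : ℝ := 1 - B1 p - B2 p

lemma sqrt3_pos : (0:ℝ) < Real.sqrt 3 := Real.sqrt_pos.2 (by norm_num)
lemma sqrt3_ne : (Real.sqrt 3) ≠ 0 := ne_of_gt sqrt3_pos
lemma sqrt3_sq : Real.sqrt 3 * Real.sqrt 3 = 3 := Real.mul_self_sqrt (by norm_num)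

lemma bary_one (p : ℝ × ℝ) : bary y1 y2 y3 p 1 = B1 p := by
  simp only [bary, cross, y1, y2, y3, if_pos, B1, Prod.fst_sub, Prod.snd_sub]
  norm_num
  have hs := sqrt3_sq
  have hne := sqrt3_ne
  field_simp

lemma bary_two (p : ℝ × ℝ) : bary y1 y2 y3 p 2 = B2 p := by
  simp only [bary, cross, y1, y2, y3, B2, Prod.fst_sub, Prod.snd_sub,
    if_neg (show (2:Fin 3) ≠ 1 by decide), if_pos rfl]
  norm_num
  rw [div_div_eq_mul_div]
  ring

lemma bary_zero (p : ℝ × ℝ) : bary y1 y2 y3 p 0 = B0 p := by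
  have h1 := bary_one p
  have h2 := bary_two p
  simp only [bary, if_neg (show (0:Fin 3) ≠ 1 by decide),
    if_neg (show (0:Fin 3) ≠ 2 by decide)]
  simp only [bary, if_pos rfl, if_neg (show (2:Fin 3) ≠ 1 by decide), if_true] at h1 h2
  rw [h1, h2, B0]

lemma mem_T_iff (p : ℝ × ℝ) : p ∈ T ↔ 0 ≤ B0 p ∧ 0 ≤ B1 p ∧ 0 ≤ B2 p := by
  constructor
  · intro h
    exact ⟨by simpa [bary_zero] using h 0, by simpa [bary_one] using h 1,
      by simpa [bary_two] using h 2⟩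
  · rintro ⟨h0, h1, h2⟩ i
    fin_cases i
    · simpa [bary_zero] using h0
    · simpa [bary_one] using h1
    · simpa [bary_two] using h2

lemma contB1 : Continuous B1 := by unfold B1; fun_prop
lemma contB2 : Continuous B2 := by unfold B2; fun_prop
lemma contB0 : Continuous B0 := by unfold B0; exact (continuous_const.sub contB1).sub contB2

def Sset (c0 c1 c2 : ℝ) : Set (ℝ × ℝ) := {p | c0 ≤ B0 p ∧ c1 ≤ B1 p ∧ c2 ≤ B2 p}

lemma measSset (c0 c1 c2 : ℝ) : MeasurableSet (Sset c0 c1 c2) := by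
  have : Sset c0 c1 c2 = B0 ⁻¹' Ici c0 ∩ (B1 ⁻¹' Ici c1 ∩ B2 ⁻¹' Ici c2) := rfl
  rw [this]
  exact ((isClosed_Ici.preimage contB0).inter ((isClosed_Ici.preimage contB1).inter
    (isClosed_Ici.preimage contB2))).measurableSet

lemma ofReal_max0 (x : ℝ) : ENNReal.ofReal (max 0 x) = ENNReal.ofReal x := by
  rcases le_total x 0 with h | h
  · rw [max_eq_left h, ENNReal.ofReal_zero, eq_comm, ENNReal.ofReal_eq_zero]; exact h
  · rw [max_eq_right h]

lemma int_linear (A B C D : ℝ) : ∫ a in A..B, (C * a + D) =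
    C * (B ^ 2 - A ^ 2) / 2 + D * (B - A) := by
  rw [intervalIntegral.integral_add ((intervalIntegral.intervalIntegrable_id).const_mul C)
      (intervalIntegrable_const), intervalIntegral.integral_const_mul, integral_id,
      intervalIntegral.integral_const]
  rw [smul_eq_mul]
  ring

lemma lint_helper (f : ℝ → ℝ) (A B C : ℝ) (hAB : A ≤ B) (hm : Measurable f)
    (h0 : ∀ x, 0 ≤ f x) (hb : ∀ x, f x ≤ C) (hv : ∀ x, x ∉ Icc A B → f x = 0) :
    ∫⁻ x, ENNReal.ofReal (f x) = ENNReal.ofReal (∫ x in A..B, f x) := by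
  have hind : (fun x => ENNReal.ofReal (f x)) =
      (Icc A B).indicator (fun x => ENNReal.ofReal (f x)) := by
    funext x
    by_cases hx : x ∈ Icc A B
    · rw [Set.indicator_of_mem hx]
    · rw [Set.indicator_of_notMem hx, hv x hx, ENNReal.ofReal_zero]
  rw [hind, lintegral_indicator measurableSet_Icc _]
  have hint : IntegrableOn f (Icc A B) volume := by
    apply Measure.integrableOn_of_bounded (M := C) (by simp) hm.aestronglyMeasurable
    filter_upwards with a
    rw [Real.norm_eq_abs, abs_of_nonneg (h0 a)]
    exact hb a
  rw [← ofReal_integral_eq_lintegral_ofReal hint (by filter_upwards with a using h0 a)]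
  rw [MeasureTheory.integral_Icc_eq_integral_Ioc, intervalIntegral.integral_of_le hAB]

lemma vol_Sset (c0 c1 c2 : ℝ) (h0 : 0 ≤ c0) (h1 : 0 ≤ c1) (h2 : 0 ≤ c2) :
    volume (Sset c0 c1 c2) =
      ENNReal.ofReal (Real.sqrt 3 / 4 * (max 0 (1 - c0 - c1 - c2)) ^ 2) := by
  have hs3 := sqrt3_pos
  have hsq := sqrt3_sq
  rw [MeasureTheory.Measure.volume_eq_prod, Measure.prod_apply (measSset c0 c1 c2)]
  have hslice : ∀ a : ℝ, Prod.mk a ⁻¹' (Sset c0 c1 c2) =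
      Icc (Real.sqrt 3 * c2 / 2)
        (min (Real.sqrt 3 * (1 - a - c0)) (Real.sqrt 3 * (a - c1))) := by
    intro a
    ext y
    simp only [Sset, mem_preimage, mem_setOf_eq, mem_Icc, B0, B1, B2, le_min_iff]
    constructor
    · rintro ⟨k0, k1, k2⟩
      have q0 : y / Real.sqrt 3 ≤ 1 - a - c0 := by
        simp only [div_eq_mul_inv] at *; linarith
      have q1 : y / Real.sqrt 3 ≤ a - c1 := by
        simp only [div_eq_mul_inv] at *; linarith
      have q2 : c2 / 2 ≤ y / Real.sqrt 3 := by
        simp only [div_eq_mul_inv] at *; linarith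
      rw [div_le_iff₀ hs3] at q0 q1
      rw [le_div_iff₀ hs3] at q2
      exact ⟨by linarith, by linarith, by linarith⟩
    · rintro ⟨k2, ka, kb⟩
      have q0 : y / Real.sqrt 3 ≤ 1 - a - c0 := by rw [div_le_iff₀ hs3]; linarith
      have q1 : y / Real.sqrt 3 ≤ a - c1 := by rw [div_le_iff₀ hs3]; linarith
      have q2 : c2 / 2 ≤ y / Real.sqrt 3 := by rw [le_div_iff₀ hs3]; linarith
      exact ⟨by simp only [div_eq_mul_inv] at *; linarith,
        by simp only [div_eq_mul_inv] at *; linarith,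
        by simp only [div_eq_mul_inv] at *; linarith⟩
  simp only [hslice, Real.volume_Icc]
  set f : ℝ → ℝ := fun a =>
    max 0 (min (Real.sqrt 3 * (1 - a - c0)) (Real.sqrt 3 * (a - c1))
      - Real.sqrt 3 * c2 / 2) with hf
  have hcong : ∀ a : ℝ, ENNReal.ofReal (min (Real.sqrt 3 * (1 - a - c0))
      (Real.sqrt 3 * (a - c1)) - Real.sqrt 3 * c2 / 2) = ENNReal.ofReal (f a) := by
    intro a; rw [hf]; exact (ofReal_max0 _).symm
  rw [lintegral_congr hcong]
  have hs3' := sqrt3_ne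
  rcases le_or_gt (1 - c0 - c1 - c2) 0 with hneg | hpos
  · have hz : ∀ a : ℝ, f a = 0 := by
      intro a
      rw [hf]
      apply max_eq_left
      have l1 := min_le_left (Real.sqrt 3 * (1 - a - c0)) (Real.sqrt 3 * (a - c1))
      have l2 := min_le_right (Real.sqrt 3 * (1 - a - c0)) (Real.sqrt 3 * (a - c1))
      nlinarith [mul_nonneg hs3.le (neg_nonneg.2 hneg)]
    simp only [hz, ENNReal.ofReal_zero, lintegral_zero]
    rw [max_eq_left hneg]
    norm_num
  · have hs : 0 ≤ 1 - c0 - c1 - c2 := hpos.le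
    set A := c1 + c2 / 2 with hA
    set B := 1 - c0 - c2 / 2 with hB
    set m := (1 - c0 + c1) / 2 with hm
    have hAm : A ≤ m := by rw [hA, hm]; linarith
    have hmB : m ≤ B := by rw [hm, hB]; linarith
    have hAB : A ≤ B := hAm.trans hmB
    have hcf : Continuous f := by
      rw [hf]
      fun_prop
    have key : ∫⁻ x, ENNReal.ofReal (f x) = ENNReal.ofReal (∫ x in A..B, f x) := by
      apply lint_helper f A B (Real.sqrt 3) hAB hcf.measurable
        (fun x => le_max_left _ _)
      · intro x
        rw [hf]
        have l1 := min_le_left (Real.sqrt 3 * (1 - x - c0)) (Real.sqrt 3 * (x - c1))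
        have l2 := min_le_right (Real.sqrt 3 * (1 - x - c0)) (Real.sqrt 3 * (x - c1))
        apply max_le hs3.le
        nlinarith [mul_nonneg hs3.le h0, mul_nonneg hs3.le h1, mul_nonneg hs3.le h2]
      · intro x hx
        rw [mem_Icc, not_and_or] at hx
        rw [hf]
        apply max_eq_left
        rcases hx with hx | hx
        · push_neg at hx
          have : Real.sqrt 3 * (x - c1) ≤ Real.sqrt 3 * (c2 / 2) :=
            mul_le_mul_of_nonneg_left (by rw [hA] at hx; linarith) hs3.le
          have l2 := min_le_right (Real.sqrt 3 * (1 - x - c0)) (Real.sqrt 3 * (x - c1))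
          linarith
        · push_neg at hx
          have : Real.sqrt 3 * (1 - x - c0) ≤ Real.sqrt 3 * (c2 / 2) :=
            mul_le_mul_of_nonneg_left (by rw [hB] at hx; linarith) hs3.le
          have l1 := min_le_left (Real.sqrt 3 * (1 - x - c0)) (Real.sqrt 3 * (x - c1))
          linarith
    rw [key]
    have p1 : ∫ x in A..m, f x = Real.sqrt 3 * (m ^ 2 - A ^ 2) / 2
        + (-(Real.sqrt 3 * (c1 + c2 / 2))) * (m - A) := by
      rw [← int_linear A m (Real.sqrt 3) (-(Real.sqrt 3 * (c1 + c2 / 2)))]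
      apply intervalIntegral.integral_congr
      intro x hx
      rw [Set.uIcc_of_le hAm, mem_Icc] at hx
      rw [hf]
      have hmin : min (Real.sqrt 3 * (1 - x - c0)) (Real.sqrt 3 * (x - c1))
          = Real.sqrt 3 * (x - c1) :=
        min_eq_right (mul_le_mul_of_nonneg_left (by rw [hm] at hx; linarith [hx.2]) hs3.le)
      simp only [hmin]
      rw [max_eq_right]
      · ring
      · have : Real.sqrt 3 * (c2 / 2) ≤ Real.sqrt 3 * (x - c1) :=
          mul_le_mul_of_nonneg_left (by rw [hA] at hx; linarith [hx.1]) hs3.le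
        linarith
    have p2 : ∫ x in m..B, f x = (-(Real.sqrt 3)) * (B ^ 2 - m ^ 2) / 2
        + (Real.sqrt 3 * (1 - c0 - c2 / 2)) * (B - m) := by
      rw [← int_linear m B (-(Real.sqrt 3)) (Real.sqrt 3 * (1 - c0 - c2 / 2))]
      apply intervalIntegral.integral_congr
      intro x hx
      rw [Set.uIcc_of_le hmB, mem_Icc] at hx
      rw [hf]
      have hmin : min (Real.sqrt 3 * (1 - x - c0)) (Real.sqrt 3 * (x - c1))
          = Real.sqrt 3 * (1 - x - c0) :=
        min_eq_left (mul_le_mul_of_nonneg_left (by rw [hm] at hx; linarith [hx.1]) hs3.le)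
      simp only [hmin]
      rw [max_eq_right]
      · ring
      · have : Real.sqrt 3 * (c2 / 2) ≤ Real.sqrt 3 * (1 - x - c0) :=
          mul_le_mul_of_nonneg_left (by rw [hB] at hx; linarith [hx.2]) hs3.le
        linarith
    have hsplit : ∫ x in A..B, f x = (∫ x in A..m, f x) + ∫ x in m..B, f x :=
      (intervalIntegral.integral_add_adjacent_intervals
        (hcf.intervalIntegrable _ _) (hcf.intervalIntegrable _ _)).symm
    rw [hsplit, p1, p2, max_eq_right hs, hA, hB, hm]
    congr 1
    ring

def Mx (p : ℝ × ℝ) : ℝ := max (B0 p) (max (B1 p) (B2 p))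

lemma contMx : Continuous Mx := (contB0.max (contB1.max contB2))

lemma sum_B (p : ℝ × ℝ) : B0 p + B1 p + B2 p = 1 := by rw [B0]; ring

lemma T_eq : T = Sset 0 0 0 := by
  ext p; rw [mem_T_iff]; rfl

lemma measT : MeasurableSet T := T_eq ▸ measSset 0 0 0

lemma volT : volume T = ENNReal.ofReal (Real.sqrt 3 / 4) := by
  rw [T_eq, vol_Sset 0 0 0 le_rfl le_rfl le_rfl]
  norm_num

lemma bary_jmax (x : ℝ × ℝ) : bary y1 y2 y3 x (jmax y1 y2 y3 x) = Mx x := by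
  rw [jmax]
  split_ifs with h1 h2
  · rw [bary_one, bary_two, bary_zero] at h1
    rw [bary_zero, Mx, max_eq_left (max_le h1.1 h1.2)]
  · rw [bary_one, bary_two, bary_zero] at h1
    rw [bary_two, bary_one] at h2
    push_neg at h1
    have hb : B0 x ≤ B1 x := by
      rcases le_or_gt (B1 x) (B0 x) with h | h
      · linarith [h1 h]
      · exact h.le
    rw [bary_one, Mx, max_eq_left h2, max_eq_right hb]
  · rw [bary_one, bary_two, bary_zero] at h1
    rw [bary_two, bary_one] at h2
    push_neg at h1 h2
    have h02 : B0 x ≤ B2 x := by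
      rcases le_or_gt (B1 x) (B0 x) with h | h
      · linarith [h1 h]
      · linarith
    rw [bary_two, Mx, max_eq_right h2.le, max_eq_right h02]

lemma Mx_le_one {x : ℝ × ℝ} (hx : x ∈ T) : Mx x ≤ 1 := by
  rw [mem_T_iff] at hx
  have := sum_B x
  exact max_le (by linarith [hx.2.1, hx.2.2]) (max_le (by linarith [hx.1, hx.2.2])
    (by linarith [hx.1, hx.2.1]))

lemma minmax (s : ℝ) (hs : 0 ≤ s) : max 0 (1 - max 0 (1 - s)) = min 1 s := by
  rcases le_total s 1 with h | h
  · rw [max_eq_right (by linarith : (0:ℝ) ≤ 1 - s),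
      show 1 - (1 - s) = s by ring, max_eq_right hs, min_eq_right h]
  · rw [max_eq_left (by linarith : 1 - s ≤ 0), min_eq_left h]
    norm_num

lemma vol_N (r : ℝ) (hr : 1 ≤ r) {x : ℝ × ℝ} (hx : x ∈ T) :
    volume (N r x) = ENNReal.ofReal (Real.sqrt 3 / 4 * (min 1 (r * (1 - Mx x))) ^ 2) := by
  have hs : 0 ≤ r * (1 - Mx x) := mul_nonneg (by linarith) (by linarith [Mx_le_one hx])
  set s := r * (1 - Mx x) with hsdef
  have hc : (0:ℝ) ≤ max 0 (1 - s) := le_max_left _ _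
  have hcase : jmax y1 y2 y3 x = 0 ∨ jmax y1 y2 y3 x = 1 ∨ jmax y1 y2 y3 x = 2 := by
    have h3 : ∀ i : Fin 3, i = 0 ∨ i = 1 ∨ i = 2 := by decide
    exact h3 _
  have hMx := bary_jmax x
  rcases hcase with hj | hj | hj
  · have hN : N r x = Sset (max 0 (1 - s)) 0 0 := by
      ext z
      simp only [N, prox, mem_setOf_eq]
      rw [hMx, hj, bary_zero, show tri y1 y2 y3 = T from rfl, mem_T_iff, Sset, mem_setOf_eq]
      constructor
      · rintro ⟨⟨h0', h1', h2'⟩, hle⟩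
        exact ⟨max_le_iff.2 ⟨h0', by linarith⟩, h1', h2'⟩
      · rintro ⟨h0', h1', h2'⟩
        exact ⟨⟨le_trans hc h0', h1', h2'⟩, by linarith [le_max_right (0:ℝ) (1 - s)]⟩
    rw [hN, vol_Sset _ _ _ hc le_rfl le_rfl]
    rw [show 1 - max 0 (1 - s) - 0 - 0 = 1 - max 0 (1 - s) by ring, minmax s hs]
  · have hN : N r x = Sset 0 (max 0 (1 - s)) 0 := by
      ext z
      simp only [N, prox, mem_setOf_eq]
      rw [hMx, hj, bary_one, show tri y1 y2 y3 = T from rfl, mem_T_iff, Sset, mem_setOf_eq]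
      constructor
      · rintro ⟨⟨h0', h1', h2'⟩, hle⟩
        exact ⟨h0', max_le_iff.2 ⟨h1', by linarith⟩, h2'⟩
      · rintro ⟨h0', h1', h2'⟩
        exact ⟨⟨h0', le_trans hc h1', h2'⟩, by linarith [le_max_right (0:ℝ) (1 - s)]⟩
    rw [hN, vol_Sset _ _ _ le_rfl hc le_rfl]
    rw [show 1 - 0 - max 0 (1 - s) - 0 = 1 - max 0 (1 - s) by ring, minmax s hs]
  · have hN : N r x = Sset 0 0 (max 0 (1 - s)) := by
      ext z
      simp only [N, prox, mem_setOf_eq]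
      rw [hMx, hj, bary_two, show tri y1 y2 y3 = T from rfl, mem_T_iff, Sset, mem_setOf_eq]
      constructor
      · rintro ⟨⟨h0', h1', h2'⟩, hle⟩
        exact ⟨h0', h1', max_le_iff.2 ⟨h2', by linarith⟩⟩
      · rintro ⟨h0', h1', h2'⟩
        exact ⟨⟨h0', h1', le_trans hc h2'⟩, by linarith [le_max_right (0:ℝ) (1 - s)]⟩
    rw [hN, vol_Sset _ _ _ le_rfl le_rfl hc]
    rw [show 1 - 0 - 0 - max 0 (1 - s) = 1 - max 0 (1 - s) by ring, minmax s hs]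

def W (u : ℝ) : Set (ℝ × ℝ) := {x | u ≤ B0 x ∨ u ≤ B1 x ∨ u ≤ B2 x} ∩ T

lemma vol_W (u : ℝ) (hu : 0 ≤ u) : volume (W u) =
    ENNReal.ofReal (Real.sqrt 3 / 4 * (3 * (max 0 (1 - u)) ^ 2
      - 3 * (max 0 (1 - 2 * u)) ^ 2 + (max 0 (1 - 3 * u)) ^ 2)) := by
  have q1 : max 0 (1 - 2*u) ≤ max 0 (1 - u) := max_le_max le_rfl (by linarith)
  have q2 : max 0 (1 - 3*u) ≤ max 0 (1 - 2*u) := max_le_max le_rfl (by linarith)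
  have n1 : (0:ℝ) ≤ max 0 (1 - u) := le_max_left _ _
  have n2 : (0:ℝ) ≤ max 0 (1 - 2*u) := le_max_left _ _
  have n3 : (0:ℝ) ≤ max 0 (1 - 3*u) := le_max_left _ _
  have hW : W u = Sset u 0 0 ∪ ((Sset 0 u 0) \ (Sset u u 0)
      ∪ ((Sset 0 0 u) \ (Sset u 0 u ∪ Sset 0 u u))) := by
    ext x
    simp only [W, Sset, mem_inter_iff, mem_setOf_eq, mem_union, mem_diff, mem_setOf_eq]
    rw [mem_T_iff]
    constructor
    · rintro ⟨hor, h0', h1', h2'⟩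
      rcases le_or_gt u (B0 x) with hb0 | hb0
      · exact Or.inl ⟨hb0, h1', h2'⟩
      · rcases le_or_gt u (B1 x) with hb1 | hb1
        · exact Or.inr (Or.inl ⟨⟨h0', hb1, h2'⟩, fun hc => absurd hc.1 (not_le.2 hb0)⟩)
        · have hb2 : u ≤ B2 x := by
            rcases hor with h | h | h
            · exact absurd h (not_le.2 hb0)
            · exact absurd h (not_le.2 hb1)
            · exact h
          refine Or.inr (Or.inr ⟨⟨h0', h1', hb2⟩, ?_⟩)
          rintro (hc | hc)
          · exact absurd hc.1 (not_le.2 hb0)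
          · exact absurd hc.2.1 (not_le.2 hb1)
    · rintro (⟨ha, hb, hc⟩ | ⟨⟨ha, hb, hc⟩, _⟩ | ⟨⟨ha, hb, hc⟩, _⟩)
      · exact ⟨Or.inl ha, hu.trans ha, hb, hc⟩
      · exact ⟨Or.inr (Or.inl hb), ha, hu.trans hb, hc⟩
      · exact ⟨Or.inr (Or.inr hc), ha, hb, hu.trans hc⟩
  have vS100 := vol_Sset u 0 0 hu le_rfl le_rfl
  have vS010 := vol_Sset 0 u 0 le_rfl hu le_rfl
  have vS110 := vol_Sset u u 0 hu hu le_rfl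
  have vS001 := vol_Sset 0 0 u le_rfl le_rfl hu
  have vS101 := vol_Sset u 0 u hu le_rfl hu
  have vS011 := vol_Sset 0 u u le_rfl hu hu
  have vS111 := vol_Sset u u u hu hu hu
  -- measure of the two-set union
  have hsub101 : Sset u 0 u ⊆ Sset 0 0 u := fun z hz => ⟨hu.trans hz.1, hz.2⟩
  have hsub011 : Sset 0 u u ⊆ Sset 0 0 u := fun z hz => ⟨hz.1, hu.trans hz.2.1, hz.2.2⟩
  have hinter : Sset u 0 u ∩ Sset 0 u u = Sset u u u := by
    ext z
    simp only [Sset, mem_inter_iff, mem_setOf_eq]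
    constructor
    · rintro ⟨⟨a, -, c⟩, ⟨-, b, -⟩⟩
      exact ⟨a, b, c⟩
    · rintro ⟨a, b, c⟩
      exact ⟨⟨a, hu.trans b, c⟩, ⟨hu.trans a, b, c⟩⟩
  have hU : volume (Sset u 0 u ∪ Sset 0 u u) =
      ENNReal.ofReal (Real.sqrt 3 / 4 * (2 * (max 0 (1 - 2*u)) ^ 2 - (max 0 (1 - 3*u)) ^ 2)) := by
    have hie := measure_union_add_inter (μ := volume) (Sset u 0 u) (measSset 0 u u)
    rw [hinter, vS111, vS101, vS011] at hie
    have h1e : (1 : ℝ) - u - 0 - u = 1 - 2*u := by ring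
    have h2e : (1 : ℝ) - 0 - u - u = 1 - 2*u := by ring
    have h3e : (1 : ℝ) - u - u - u = 1 - 3*u := by ring
    rw [h1e, h2e, h3e, ← ENNReal.ofReal_add (by positivity) (by positivity)] at hie
    have := ENNReal.eq_sub_of_add_eq (by simp) hie
    rw [this, ← ENNReal.ofReal_sub _ (by positivity)]
    congr 1
    ring
  -- measures of the pieces
  have hd1 : volume ((Sset 0 u 0) \ (Sset u u 0)) =
      ENNReal.ofReal (Real.sqrt 3 / 4 * ((max 0 (1 - u)) ^ 2 - (max 0 (1 - 2*u)) ^ 2)) := by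
    have hsub : Sset u u 0 ⊆ Sset 0 u 0 := fun z hz => ⟨hu.trans hz.1, hz.2⟩
    rw [measure_diff hsub (measSset u u 0).nullMeasurableSet
        (by rw [vS110]; simp), vS010, vS110,
      show (1 : ℝ) - 0 - u - 0 = 1 - u by ring, show (1 : ℝ) - u - u - 0 = 1 - 2*u by ring,
      ← ENNReal.ofReal_sub _ (by positivity)]
    congr 1
    ring
  have hd2 : volume ((Sset 0 0 u) \ (Sset u 0 u ∪ Sset 0 u u)) =
      ENNReal.ofReal (Real.sqrt 3 / 4 * ((max 0 (1 - u)) ^ 2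
        - (2 * (max 0 (1 - 2*u)) ^ 2 - (max 0 (1 - 3*u)) ^ 2))) := by
    rw [measure_diff (union_subset hsub101 hsub011)
        ((measSset u 0 u).union (measSset 0 u u)).nullMeasurableSet
        (by rw [hU]; simp), vS001, hU,
      show (1 : ℝ) - 0 - 0 - u = 1 - u by ring,
      ← ENNReal.ofReal_sub _ (by nlinarith [sqrt3_pos, pow_le_pow_left₀ n3 q2 2])]
    congr 1
    ring
  -- nonnegativity of the real values of the pieces
  have hval2 : (0:ℝ) ≤ Real.sqrt 3 / 4 * ((max 0 (1 - u)) ^ 2 - (max 0 (1 - 2*u)) ^ 2) := by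
    have h := pow_le_pow_left₀ n2 q1 2
    nlinarith [sqrt3_pos]
  have hval3 : (0:ℝ) ≤ Real.sqrt 3 / 4 * ((max 0 (1 - u)) ^ 2
      - (2 * (max 0 (1 - 2*u)) ^ 2 - (max 0 (1 - 3*u)) ^ 2)) := by
    have hle : volume (Sset u 0 u ∪ Sset 0 u u) ≤ volume (Sset 0 0 u) :=
      measure_mono (union_subset hsub101 hsub011)
    rw [hU, vS001, show (1 : ℝ) - 0 - 0 - u = 1 - u by ring] at hle
    have h := (ENNReal.ofReal_le_ofReal_iff (by positivity)).1 hle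
    nlinarith [sqrt3_pos]
  -- disjointness
  have hdisj1 : Disjoint ((Sset 0 u 0) \ (Sset u u 0))
      ((Sset 0 0 u) \ (Sset u 0 u ∪ Sset 0 u u)) := by
    rw [Set.disjoint_left]
    rintro z ⟨hz1, hz2⟩ ⟨hz3, hz4⟩
    exact hz4 (Or.inr ⟨hz3.1, hz1.2.1, hz3.2.2⟩)
  have hdisj2 : Disjoint (Sset u 0 0) ((Sset 0 u 0) \ (Sset u u 0)
      ∪ ((Sset 0 0 u) \ (Sset u 0 u ∪ Sset 0 u u))) := by
    rw [Set.disjoint_left]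
    rintro z hz1 (⟨hz2, hz3⟩ | ⟨hz2, hz3⟩)
    · exact hz3 ⟨hz1.1, hz2.2.1, hz2.2.2⟩
    · exact hz3 (Or.inl ⟨hz1.1, hz2.2.1, hz2.2.2⟩)
  rw [hW, measure_union hdisj2 (((measSset 0 u 0).diff (measSset u u 0)).union
      ((measSset 0 0 u).diff ((measSset u 0 u).union (measSset 0 u u)))),
    measure_union hdisj1 ((measSset 0 0 u).diff ((measSset u 0 u).union (measSset 0 u u))),
    vS100, hd1, hd2, show (1 : ℝ) - u - 0 - 0 = 1 - u by ring,
    ← ENNReal.ofReal_add (by positivity) hval3, ← ENNReal.ofReal_add (by positivity)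
      (by positivity)]
  congr 1
  ring

lemma jmax_eq (x : ℝ × ℝ) : jmax y1 y2 y3 x =
    if B1 x ≤ B0 x ∧ B2 x ≤ B0 x then 0 else if B2 x ≤ B1 x then 1 else 2 := by
  rw [jmax, bary_one, bary_two, bary_zero]

lemma measSprod (r : ℝ) : MeasurableSet {p : (ℝ × ℝ) × (ℝ × ℝ) | p.2 ∈ N r p.1} := by
  have hSeq : {p : (ℝ × ℝ) × (ℝ × ℝ) | p.2 ∈ N r p.1} =
      ({p : (ℝ × ℝ) × (ℝ × ℝ) | B1 p.1 ≤ B0 p.1 ∧ B2 p.1 ≤ B0 p.1} ∩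
        {p | p.2 ∈ T ∧ 1 - B0 p.2 ≤ r * (1 - B0 p.1)})
      ∪ (({p : (ℝ × ℝ) × (ℝ × ℝ) | ¬(B1 p.1 ≤ B0 p.1 ∧ B2 p.1 ≤ B0 p.1)} ∩
          {p | B2 p.1 ≤ B1 p.1}) ∩ {p | p.2 ∈ T ∧ 1 - B1 p.2 ≤ r * (1 - B1 p.1)})
      ∪ (({p : (ℝ × ℝ) × (ℝ × ℝ) | ¬(B1 p.1 ≤ B0 p.1 ∧ B2 p.1 ≤ B0 p.1)} ∩
          {p | ¬ B2 p.1 ≤ B1 p.1}) ∩ {p | p.2 ∈ T ∧ 1 - B2 p.2 ≤ r * (1 - B2 p.1)}) := by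
    ext p
    simp only [N, prox, mem_setOf_eq, mem_union, mem_inter_iff,
      show tri y1 y2 y3 = T from rfl]
    rw [jmax_eq]
    split_ifs with h1 h2
    · rw [bary_zero, bary_zero]
      tauto
    · rw [bary_one, bary_one]
      tauto
    · rw [bary_two, bary_two]
      tauto
  rw [hSeq]
  have m1 : Measurable fun p : (ℝ × ℝ) × (ℝ × ℝ) => B0 p.1 := (contB0.measurable).comp measurable_fst
  have m2 : Measurable fun p : (ℝ × ℝ) × (ℝ × ℝ) => B1 p.1 := (contB1.measurable).comp measurable_fst
  have m3 : Measurable fun p : (ℝ × ℝ) × (ℝ × ℝ) => B2 p.1 := (contB2.measurable).comp measurable_fst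
  have m1' : Measurable fun p : (ℝ × ℝ) × (ℝ × ℝ) => B0 p.2 := (contB0.measurable).comp measurable_snd
  have m2' : Measurable fun p : (ℝ × ℝ) × (ℝ × ℝ) => B1 p.2 := (contB1.measurable).comp measurable_snd
  have m3' : Measurable fun p : (ℝ × ℝ) × (ℝ × ℝ) => B2 p.2 := (contB2.measurable).comp measurable_snd
  have hT2 : MeasurableSet {p : (ℝ × ℝ) × (ℝ × ℝ) | p.2 ∈ T} := measT.preimage measurable_snd
  have c1 : MeasurableSet {p : (ℝ × ℝ) × (ℝ × ℝ) | B1 p.1 ≤ B0 p.1 ∧ B2 p.1 ≤ B0 p.1} :=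
    (measurableSet_le m2 m1).inter (measurableSet_le m3 m1)
  refine (MeasurableSet.union (MeasurableSet.union ?_ ?_) ?_)
  · exact c1.inter (hT2.inter (measurableSet_le (measurable_const.sub m1')
      ((measurable_const.sub m1).const_mul r)))
  · exact (c1.compl.inter (measurableSet_le m3 m2)).inter (hT2.inter
      (measurableSet_le (measurable_const.sub m2') ((measurable_const.sub m2).const_mul r)))
  · exact (c1.compl.inter (measurableSet_le m3 m2).compl).inter (hT2.inter
      (measurableSet_le (measurable_const.sub m3') ((measurable_const.sub m3).const_mul r)))

lemma contphi (r : ℝ) : Continuous (fun x : ℝ × ℝ => (min 1 (r * (1 - Mx x))) ^ 2 : (ℝ × ℝ) → ℝ) := by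
  have : Continuous Mx := contMx
  fun_prop

lemma mu_eq (r : ℝ) (hr : 1 ≤ r) : ((unif T).prod (unif T)) {p | p.2 ∈ N r p.1} =
    (ENNReal.ofReal (Real.sqrt 3 / 4))⁻¹ *
      ∫⁻ x in T, ENNReal.ofReal ((min 1 (r * (1 - Mx x))) ^ 2) := by
  have hk0 : (0:ℝ) < Real.sqrt 3 / 4 := by positivity
  have ha0 : ENNReal.ofReal (Real.sqrt 3 / 4) ≠ 0 := by
    simp [ENNReal.ofReal_eq_zero, not_le, hk0]
  have hatop : ENNReal.ofReal (Real.sqrt 3 / 4) ≠ ⊤ := ENNReal.ofReal_ne_top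
  haveI : IsFiniteMeasure (unif T) := by
    constructor
    rw [show unif T = (volume T)⁻¹ • volume.restrict T from rfl, Measure.smul_apply,
      smul_eq_mul, Measure.restrict_apply_univ, volT]
    exact ENNReal.mul_lt_top (by simp) (by simp)
  rw [Measure.prod_apply (measSprod r)]
  have hpre : ∀ x : ℝ × ℝ, Prod.mk x ⁻¹' {p : (ℝ × ℝ) × (ℝ × ℝ) | p.2 ∈ N r p.1} = N r x :=
    fun x => rfl
  simp only [hpre]
  have step : ∫⁻ x, (unif T) (N r x) ∂(unif T) =
      (volume T)⁻¹ * ∫⁻ x in T, (unif T) (N r x) ∂volume := lintegral_smul_measure _ _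
  rw [step, volT]
  have hinner : ∀ x ∈ T, unif T (N r x) = (ENNReal.ofReal (Real.sqrt 3 / 4))⁻¹ *
      (ENNReal.ofReal (Real.sqrt 3 / 4) * ENNReal.ofReal ((min 1 (r * (1 - Mx x))) ^ 2)) := by
    intro x hx
    rw [show unif T = (volume T)⁻¹ • volume.restrict T from rfl, Measure.smul_apply,
      smul_eq_mul, volT, Measure.restrict_apply' measT,
      inter_eq_left.2 (fun z hz => hz.1), vol_N r hr hx,
      ENNReal.ofReal_mul hk0.le]
  rw [setLIntegral_congr_fun measT hinner]
  rw [lintegral_const_mul _ (((contphi r).measurable.ennreal_ofReal).const_mul _)]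
  rw [lintegral_const_mul _ ((contphi r).measurable).ennreal_ofReal]
  rw [← mul_assoc, ← mul_assoc, mul_comm ((ENNReal.ofReal (Real.sqrt 3 / 4))⁻¹)]
  rw [mul_assoc _ _ (ENNReal.ofReal (Real.sqrt 3 / 4)), ENNReal.inv_mul_cancel ha0 hatop]
  rw [mul_one]

def Psi (r t : ℝ) : ℝ :=
  if 0 < t ∧ t < 1 then
    Real.sqrt 3 / 4 * (1 - 3 * (Real.sqrt t / r) ^ 2
      + 3 * (max 0 (2 * (Real.sqrt t / r) - 1)) ^ 2
      - (max 0 (3 * (Real.sqrt t / r) - 2)) ^ 2)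
  else 0

lemma psi_bounds (r t : ℝ) (hr : 1 ≤ r) : 0 ≤ Psi r t ∧ Psi r t ≤ Real.sqrt 3 / 4 := by
  have hk : (0:ℝ) < Real.sqrt 3 / 4 := by positivity
  rw [Psi]
  split_ifs with h
  · obtain ⟨ht, ht1⟩ := h
    set w := Real.sqrt t / r with hw
    have hw0 : 0 ≤ w := by positivity
    rcases le_total w (1/2) with hc | hc
    · rw [max_eq_left (by linarith), max_eq_left (by linarith)]
      have hX : (0:ℝ) ≤ 1 - 3 * w ^ 2 + 3 * (0:ℝ) ^ 2 - (0:ℝ) ^ 2 := by nlinarith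
      have hX1 : 1 - 3 * w ^ 2 + 3 * (0:ℝ) ^ 2 - (0:ℝ) ^ 2 ≤ 1 := by nlinarith
      exact ⟨mul_nonneg hk.le hX, by nlinarith [mul_le_mul_of_nonneg_left hX1 hk.le]⟩
    · rcases le_total w (2/3) with hc2 | hc2
      · rw [max_eq_right (by linarith), max_eq_left (by linarith)]
        have hX : (0:ℝ) ≤ 1 - 3 * w ^ 2 + 3 * (2 * w - 1) ^ 2 - (0:ℝ) ^ 2 := by
          nlinarith [sq_nonneg (3 * w - 2)]
        have hX1 : 1 - 3 * w ^ 2 + 3 * (2 * w - 1) ^ 2 - (0:ℝ) ^ 2 ≤ 1 := by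
          nlinarith [mul_nonneg (by linarith : (0:ℝ) ≤ 1 - w) (by linarith : (0:ℝ) ≤ 3 * w - 1)]
        exact ⟨mul_nonneg hk.le hX, by nlinarith [mul_le_mul_of_nonneg_left hX1 hk.le]⟩
      · rw [max_eq_right (by linarith), max_eq_right (by linarith)]
        have hz : 1 - 3 * w ^ 2 + 3 * (2 * w - 1) ^ 2 - (3 * w - 2) ^ 2 = 0 := by ring
        rw [hz, mul_zero]
        exact ⟨le_rfl, hk.le⟩
  · exact ⟨le_refl 0, hk.le⟩

lemma measW (u : ℝ) : MeasurableSet (W u) :=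
  (((measurableSet_le measurable_const contB0.measurable).union
    ((measurableSet_le measurable_const contB1.measurable).union
      (measurableSet_le measurable_const contB2.measurable)))).inter measT

lemma vol_phi_gt (r : ℝ) (hr : 1 ≤ r) (t : ℝ) (ht : 0 < t) :
    volume ({x : ℝ × ℝ | t < (min 1 (r * (1 - Mx x))) ^ 2} ∩ T) = ENNReal.ofReal (Psi r t) := by
  have hr0 : (0:ℝ) < r := by linarith
  rcases le_or_gt 1 t with h1 | h1
  · have he : {x : ℝ × ℝ | t < (min 1 (r * (1 - Mx x))) ^ 2} ∩ T = ∅ := by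
      ext x
      simp only [mem_inter_iff, mem_setOf_eq, mem_empty_iff_false, iff_false, not_and]
      intro hphi hx
      have hs : 0 ≤ r * (1 - Mx x) := mul_nonneg hr0.le (by linarith [Mx_le_one hx])
      have hm0 : 0 ≤ min 1 (r * (1 - Mx x)) := le_min zero_le_one hs
      have hm1 : min 1 (r * (1 - Mx x)) ≤ 1 := min_le_left _ _
      nlinarith
    rw [he, Psi, if_neg (by push_neg; intro h'; linarith)]
    simp
  · have hst : Real.sqrt t < 1 := by
      have := Real.sqrt_lt_sqrt ht.le h1
      rwa [Real.sqrt_one] at this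
    set u := 1 - Real.sqrt t / r with hu
    have htr : 0 ≤ Real.sqrt t / r := by positivity
    have hu0 : 0 ≤ u := by
      have : Real.sqrt t / r < 1 := by rw [div_lt_one hr0]; linarith
      rw [hu]; linarith
    have key : ∀ x ∈ T, (t < (min 1 (r * (1 - Mx x))) ^ 2 ↔ Mx x < u) := by
      intro x hx
      have hs : 0 ≤ r * (1 - Mx x) := mul_nonneg hr0.le (by linarith [Mx_le_one hx])
      have hmin0 : 0 ≤ min 1 (r * (1 - Mx x)) := le_min zero_le_one hs
      constructor
      · intro h
        have h2 : Real.sqrt t < min 1 (r * (1 - Mx x)) := by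
          have := Real.sqrt_lt_sqrt ht.le h
          rwa [Real.sqrt_sq hmin0] at this
        have h3 : Real.sqrt t < r * (1 - Mx x) := lt_of_lt_of_le h2 (min_le_right _ _)
        have h4 : Real.sqrt t / r < 1 - Mx x := by rw [div_lt_iff₀ hr0]; nlinarith
        rw [hu]; linarith
      · intro h
        have h4 : Real.sqrt t < r * (1 - Mx x) := by
          have h5 : Real.sqrt t / r < 1 - Mx x := by rw [hu] at h; linarith
          rw [div_lt_iff₀ hr0] at h5; nlinarith
        have h5 : Real.sqrt t < min 1 (r * (1 - Mx x)) := lt_min hst h4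
        calc t = Real.sqrt t ^ 2 := (Real.sq_sqrt ht.le).symm
        _ < (min 1 (r * (1 - Mx x))) ^ 2 := by nlinarith [Real.sqrt_nonneg t]
    have hseteq : {x : ℝ × ℝ | t < (min 1 (r * (1 - Mx x))) ^ 2} ∩ T = T \ W u := by
      ext x
      simp only [mem_inter_iff, mem_setOf_eq, mem_diff, W, mem_inter_iff, mem_setOf_eq]
      constructor
      · rintro ⟨hphi, hx⟩
        refine ⟨hx, fun hc => ?_⟩
        have hMu : Mx x < u := (key x hx).1 hphi
        have hb0 : B0 x < u := lt_of_le_of_lt (le_max_left _ _) hMu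
        have hb1 : B1 x < u := lt_of_le_of_lt ((le_max_left _ _).trans (le_max_right _ _)) hMu
        have hb2 : B2 x < u := lt_of_le_of_lt ((le_max_right _ _).trans (le_max_right _ _)) hMu
        rcases hc.1 with h | h | h
        · linarith
        · linarith
        · linarith
      · rintro ⟨hx, hnW⟩
        refine ⟨(key x hx).2 ?_, hx⟩
        by_contra hcon
        push_neg at hcon
        rw [Mx] at hcon
        rcases le_max_iff.1 hcon with h | h
        · exact hnW ⟨Or.inl h, hx⟩
        · rcases le_max_iff.1 h with h' | h'
          · exact hnW ⟨Or.inr (Or.inl h'), hx⟩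
          · exact hnW ⟨Or.inr (Or.inr h'), hx⟩
    have hnn : 0 ≤ Real.sqrt 3 / 4 * (3 * (max 0 (1 - u)) ^ 2
        - 3 * (max 0 (1 - 2 * u)) ^ 2 + (max 0 (1 - 3 * u)) ^ 2) := by
      have q1 : max 0 (1 - 2*u) ≤ max 0 (1 - u) := max_le_max le_rfl (by linarith)
      have n2 : (0:ℝ) ≤ max 0 (1 - 2*u) := le_max_left _ _
      nlinarith [sqrt3_pos, pow_le_pow_left₀ n2 q1 2, sq_nonneg (max 0 (1 - 3*u))]
    rw [hseteq, measure_diff (fun z hz => hz.2) (measW u).nullMeasurableSet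
        (by rw [vol_W u hu0]; exact ENNReal.ofReal_ne_top), volT, vol_W u hu0,
      ← ENNReal.ofReal_sub _ hnn, Psi, if_pos ⟨ht, h1⟩]
    have e1 : max 0 (1 - u) = Real.sqrt t / r := by
      rw [hu, show 1 - (1 - Real.sqrt t / r) = Real.sqrt t / r by ring, max_eq_right htr]
    have e2 : max 0 (1 - 2 * u) = max 0 (2 * (Real.sqrt t / r) - 1) := by
      rw [hu, show 1 - 2 * (1 - Real.sqrt t / r) = 2 * (Real.sqrt t / r) - 1 by ring]
    have e3 : max 0 (1 - 3 * u) = max 0 (3 * (Real.sqrt t / r) - 2) := by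
      rw [hu, show 1 - 3 * (1 - Real.sqrt t / r) = 3 * (Real.sqrt t / r) - 2 by ring]
    rw [e1, e2, e3]
    congr 1
    ring

lemma lint_T (r : ℝ) (hr : 1 ≤ r) :
    ∫⁻ x in T, ENNReal.ofReal ((min 1 (r * (1 - Mx x))) ^ 2) =
      ENNReal.ofReal (∫ t in (0:ℝ)..1, Psi r t) := by
  rw [lintegral_eq_lintegral_meas_lt (volume.restrict T)
    (Filter.Eventually.of_forall fun x => sq_nonneg _) (contphi r).aemeasurable]
  have h1 : ∀ t ∈ Ioi (0:ℝ), (volume.restrict T)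
      {a : ℝ × ℝ | t < (min 1 (r * (1 - Mx a))) ^ 2} = ENNReal.ofReal (Psi r t) := by
    intro t ht
    rw [Measure.restrict_apply' measT]
    exact vol_phi_gt r hr t ht
  rw [setLIntegral_congr_fun measurableSet_Ioi h1]
  have h2 : ∫⁻ t in Ioi (0:ℝ), ENNReal.ofReal (Psi r t) =
      ∫⁻ t, ENNReal.ofReal (Psi r t) := by
    rw [← lintegral_indicator measurableSet_Ioi]
    congr 1
    funext t
    by_cases htI : t ∈ Ioi (0:ℝ)
    · rw [Set.indicator_of_mem htI]
    · rw [Set.indicator_of_notMem htI, Psi,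
        if_neg (fun hc => htI hc.1), ENNReal.ofReal_zero]
  have measPsi : Measurable (Psi r) := by
    have : Continuous (fun t : ℝ => Real.sqrt 3 / 4 * (1 - 3 * (Real.sqrt t / r) ^ 2
        + 3 * (max 0 (2 * (Real.sqrt t / r) - 1)) ^ 2
        - (max 0 (3 * (Real.sqrt t / r) - 2)) ^ 2)) := by
      have hc := Real.continuous_sqrt
      fun_prop
    exact Measurable.ite (by
      exact (measurableSet_lt measurable_const measurable_id).inter
        (measurableSet_lt measurable_id measurable_const)) this.measurable measurable_const
  rw [h2, lint_helper (Psi r) 0 1 (Real.sqrt 3 / 4) zero_le_one measPsi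
    (fun x => (psi_bounds r x hr).1) (fun x => (psi_bounds r x hr).2)
    (fun x hx => by
      rw [Psi, if_neg]
      rw [mem_Icc, not_and_or, not_le, not_le] at hx
      rintro ⟨hc1, hc2⟩
      rcases hx with h | h
      · linarith
      · linarith)]

def gg (r t : ℝ) : ℝ := Real.sqrt 3 / 4 * (1 - 3 * (Real.sqrt t / r) ^ 2
  + 3 * (max 0 (2 * (Real.sqrt t / r) - 1)) ^ 2 - (max 0 (3 * (Real.sqrt t / r) - 2)) ^ 2)

lemma cont_gg (r : ℝ) : Continuous (gg r) := by
  unfold gg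
  have := Real.continuous_sqrt
  fun_prop

lemma psi_eq_gg (r : ℝ) : ∫ t in (0:ℝ)..1, Psi r t = ∫ t in (0:ℝ)..1, gg r t := by
  apply intervalIntegral.integral_congr_ae
  have h1 : ∀ᵐ x : ℝ, x ≠ (1:ℝ) := by
    have : ({(1:ℝ)} : Set ℝ)ᶜ ∈ ae (volume : Measure ℝ) :=
      compl_mem_ae_iff.2 (measure_singleton 1)
    filter_upwards [this] with x hx using hx
  filter_upwards [h1] with x hx hxI
  rw [Set.uIoc_of_le (by norm_num : (0:ℝ) ≤ 1)] at hxI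
  rw [Psi, if_pos ⟨hxI.1, lt_of_le_of_ne hxI.2 hx⟩, gg]

lemma int_sqrt (A B : ℝ) (h0 : 0 ≤ A) (hAB : A ≤ B) : ∫ t in A..B, Real.sqrt t =
    2/3 * Real.sqrt B ^ 3 - 2/3 * Real.sqrt A ^ 3 := by
  have h : ∀ t ∈ uIcc A B, Real.sqrt t = t ^ ((1:ℝ)/2) := fun t ht => Real.sqrt_eq_rpow t
  rw [intervalIntegral.integral_congr h, integral_rpow (Or.inl (by norm_num))]
  have hx : ∀ x : ℝ, 0 ≤ x → x ^ ((1:ℝ)/2 + 1) = Real.sqrt x ^ 3 := by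
    intro x hxx
    rw [Real.sqrt_eq_rpow, ← Real.rpow_natCast (x ^ ((1:ℝ)/2)) 3, ← Real.rpow_mul hxx]
    norm_num
  rw [hx B (h0.trans hAB), hx A h0]
  ring

lemma int_gg_low (r A B : ℝ) (hr : 0 < r) (h0 : 0 ≤ A) (hAB : A ≤ B) (hB : B ≤ r^2/4) :
    ∫ t in A..B, gg r t = Real.sqrt 3 / 4 * ((B - A) - 3 * (B^2 - A^2) / (2 * r^2)) := by
  have hcong : ∀ t ∈ uIcc A B, gg r t =
      (-(3 * (Real.sqrt 3 / 4) / r^2)) * t + Real.sqrt 3 / 4 := by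
    intro t ht
    rw [Set.uIcc_of_le hAB, mem_Icc] at ht
    have ht0 : 0 ≤ t := h0.trans ht.1
    have hst : Real.sqrt t ≤ r / 2 := by
      have hq : Real.sqrt t ≤ Real.sqrt (r^2/4) := Real.sqrt_le_sqrt (ht.2.trans hB)
      rwa [show r^2/4 = (r/2)^2 by ring, Real.sqrt_sq (by linarith)] at hq
    have hsq : Real.sqrt t ^ 2 = t := Real.sq_sqrt ht0
    rw [gg, max_eq_left (by
        have : Real.sqrt t / r ≤ 1/2 := by rw [div_le_iff₀ hr]; linarith
        linarith),
      max_eq_left (by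
        have : Real.sqrt t / r ≤ 1/2 := by rw [div_le_iff₀ hr]; linarith
        linarith)]
    rw [div_pow, hsq]
    field_simp
    ring
  rw [intervalIntegral.integral_congr hcong, int_linear]
  field_simp
  ring

lemma int_gg_mid (r A B : ℝ) (hr : 0 < r) (hA : r^2/4 ≤ A) (hAB : A ≤ B)
    (hB : Real.sqrt B ≤ 2*r/3) :
    ∫ t in A..B, gg r t = Real.sqrt 3 / 4 * (4 * (B - A) + 9 * (B^2 - A^2) / (2 * r^2)
      - (12 / r) * (2/3 * Real.sqrt B ^ 3 - 2/3 * Real.sqrt A ^ 3)) := by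
  have h0A : 0 ≤ A := le_trans (by positivity) hA
  have hcong : ∀ t ∈ uIcc A B, gg r t =
      ((9 * (Real.sqrt 3 / 4) / r^2) * t + 4 * (Real.sqrt 3 / 4))
        - (12 * (Real.sqrt 3 / 4) / r) * Real.sqrt t := by
    intro t ht
    rw [Set.uIcc_of_le hAB, mem_Icc] at ht
    have ht0 : 0 ≤ t := h0A.trans ht.1
    have hstl : r / 2 ≤ Real.sqrt t := by
      have hq : Real.sqrt (r^2/4) ≤ Real.sqrt t := Real.sqrt_le_sqrt (hA.trans ht.1)
      rwa [show r^2/4 = (r/2)^2 by ring, Real.sqrt_sq (by linarith)] at hq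
    have hstu : Real.sqrt t ≤ 2 * r / 3 := le_trans (Real.sqrt_le_sqrt ht.2) hB
    have hsq : Real.sqrt t ^ 2 = t := Real.sq_sqrt ht0
    rw [gg, max_eq_right (by
        have : 1/2 ≤ Real.sqrt t / r := by rw [le_div_iff₀ hr]; linarith
        linarith),
      max_eq_left (by
        have : Real.sqrt t / r ≤ 2/3 := by rw [div_le_iff₀ hr]; linarith
        linarith)]
    rw [div_pow, hsq]
    field_simp
    linear_combination 12 * hsq
  rw [intervalIntegral.integral_congr hcong,
    intervalIntegral.integral_sub (by
      apply Continuous.intervalIntegrable; fun_prop) (by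
      apply Continuous.intervalIntegrable
      have := Real.continuous_sqrt; fun_prop),
    int_linear, intervalIntegral.integral_const_mul, int_sqrt A B h0A hAB]
  field_simp
  ring

lemma int_gg_high (r A B : ℝ) (hr : 0 < r) (hA : (2*r/3)^2 ≤ A) (hAB : A ≤ B) :
    ∫ t in A..B, gg r t = 0 := by
  have h0A : 0 ≤ A := le_trans (by positivity) hA
  have hcong : ∀ t ∈ uIcc A B, gg r t = 0 := by
    intro t ht
    rw [Set.uIcc_of_le hAB, mem_Icc] at ht
    have ht0 : 0 ≤ t := h0A.trans ht.1
    have hstl : 2 * r / 3 ≤ Real.sqrt t := by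
      have hq : Real.sqrt ((2*r/3)^2) ≤ Real.sqrt t := Real.sqrt_le_sqrt (hA.trans ht.1)
      rwa [Real.sqrt_sq (by positivity)] at hq
    have hsq : Real.sqrt t ^ 2 = t := Real.sq_sqrt ht0
    rw [gg, max_eq_right (by
        have : 1/2 ≤ Real.sqrt t / r := by rw [le_div_iff₀ hr]; linarith
        linarith),
      max_eq_right (by
        have : 2/3 ≤ Real.sqrt t / r := by rw [le_div_iff₀ hr]; linarith
        linarith)]
    rw [div_pow, hsq]
    field_simp
    linear_combination (3 * Real.sqrt 3) * hsq
  rw [intervalIntegral.integral_congr hcong]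
  simp

lemma mu_val (r : ℝ) (hr : 1 ≤ r) (c : ℝ)
    (h : ∫ t in (0:ℝ)..1, Psi r t = Real.sqrt 3 / 4 * c) : mu r = c := by
  have hk : (0:ℝ) < Real.sqrt 3 / 4 := by positivity
  have hI : 0 ≤ ∫ t in (0:ℝ)..1, Psi r t :=
    intervalIntegral.integral_nonneg zero_le_one (fun t _ => (psi_bounds r t hr).1)
  rw [mu, mu_eq r hr, lint_T r hr, ENNReal.toReal_mul, ENNReal.toReal_inv,
    ENNReal.toReal_ofReal hk.le, ENNReal.toReal_ofReal hI, h]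
  field_simp

lemma mu_case3 (r : ℝ) (hr : 2 ≤ r) : mu r = 1 - 3/2 * (r^2)⁻¹ := by
  have hr0 : (0:ℝ) < r := by linarith
  apply mu_val r (by linarith)
  rw [psi_eq_gg, int_gg_low r 0 1 hr0 le_rfl zero_le_one (by nlinarith)]
  have : r^2 ≠ 0 := by positivity
  field_simp
  ring

lemma mu_case2 (r : ℝ) (hr1 : 3/2 ≤ r) (hr2 : r ≤ 2) :
    mu r = -(r^2)/8 + 4 - 8 * r⁻¹ + 9/2 * (r^2)⁻¹ := by
  have hr0 : (0:ℝ) < r := by linarith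
  apply mu_val r (by linarith)
  rw [psi_eq_gg]
  have hsplit : ∫ t in (0:ℝ)..1, gg r t =
      (∫ t in (0:ℝ)..(r^2/4), gg r t) + ∫ t in (r^2/4)..1, gg r t :=
    (intervalIntegral.integral_add_adjacent_intervals
      ((cont_gg r).intervalIntegrable _ _) ((cont_gg r).intervalIntegrable _ _)).symm
  have hsa : Real.sqrt (r^2/4) = r/2 := by
    rw [show r^2/4 = (r/2)^2 by ring, Real.sqrt_sq (by linarith)]
  rw [hsplit, int_gg_low r 0 (r^2/4) hr0 le_rfl (by positivity) le_rfl,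
    int_gg_mid r (r^2/4) 1 hr0 le_rfl (by nlinarith) (by rw [Real.sqrt_one]; linarith),
    Real.sqrt_one, hsa]
  have : r^2 ≠ 0 := by positivity
  field_simp
  ring

lemma mu_case1 (r : ℝ) (hr1 : 1 ≤ r) (hr2 : r ≤ 3/2) : mu r = 37/216 * r^2 := by
  have hr0 : (0:ℝ) < r := by linarith
  apply mu_val r hr1
  rw [psi_eq_gg]
  have hab : r^2/4 ≤ 4*r^2/9 := by nlinarith
  have hb1 : 4*r^2/9 ≤ 1 := by nlinarith
  have hsplit1 : ∫ t in (0:ℝ)..1, gg r t =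
      (∫ t in (0:ℝ)..(4*r^2/9), gg r t) + ∫ t in (4*r^2/9)..1, gg r t :=
    (intervalIntegral.integral_add_adjacent_intervals
      ((cont_gg r).intervalIntegrable _ _) ((cont_gg r).intervalIntegrable _ _)).symm
  have hsplit2 : ∫ t in (0:ℝ)..(4*r^2/9), gg r t =
      (∫ t in (0:ℝ)..(r^2/4), gg r t) + ∫ t in (r^2/4)..(4*r^2/9), gg r t :=
    (intervalIntegral.integral_add_adjacent_intervals
      ((cont_gg r).intervalIntegrable _ _) ((cont_gg r).intervalIntegrable _ _)).symm
  have hsa : Real.sqrt (r^2/4) = r/2 := by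
    rw [show r^2/4 = (r/2)^2 by ring, Real.sqrt_sq (by linarith)]
  have hsb : Real.sqrt (4*r^2/9) = 2*r/3 := by
    rw [show 4*r^2/9 = (2*r/3)^2 by ring, Real.sqrt_sq (by positivity)]
  rw [hsplit1, hsplit2, int_gg_low r 0 (r^2/4) hr0 le_rfl (by positivity) le_rfl,
    int_gg_mid r (r^2/4) (4*r^2/9) hr0 le_rfl hab (by rw [hsb]),
    int_gg_high r (4*r^2/9) 1 hr0 (le_of_eq (by ring)) hb1, hsa, hsb]
  have : r^2 ≠ 0 := by positivity
  field_simp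
  ring


/-- Theorem 2 (mean): the null arc probability `μ(r)` piecewise. -/
theorem arc_probability_null (r : ℝ) :
    (r ∈ Set.Ico (1 : ℝ) (3 / 2) → mu r = 37 / 216 * r ^ 2) ∧
    (r ∈ Set.Ico (3 / 2 : ℝ) 2 →
      mu r = -(r ^ 2) / 8 + 4 - 8 * r⁻¹ + 9 / 2 * (r ^ 2)⁻¹) ∧
    (r ∈ Set.Ici (2 : ℝ) → mu r = 1 - 3 / 2 * (r ^ 2)⁻¹) := by
  refine ⟨fun h => ?_, fun h => ?_, fun h => ?_⟩
  · exact mu_case1 r h.1 h.2.le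
  · exact mu_case2 r h.1 h.2.le
  · exact mu_case3 r h
end
end
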